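/- There are no 3-certificates: if a partial outmap assigns values to exactly three vertices of the n-hypercube, no two of which clash, then it is completable to a USO. -/
import Mathlib

/-- `s` is the outmap of a unique sink orientation (Szabó–Welzl criterion). -/
def IsUSO {ι : Type*} (s : (ι → Bool) → (ι → Bool)) : Prop :=
  ∀ u v : ι → Bool, u ≠ v → ∃ i, u i ≠ v i ∧ s u i ≠ s v i

/-- The set of known vertices of a partial outmap. -/
def Known {n : ℕ} (s : (Fin n → Bool) → Option (Fin n → Bool)) :
    Finset (Fin n → Bool) :=
  Finset.univ.filter (fun u => (s u).isSome)

/-- A partial outmap is completable if some USO outmap agrees with it on all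
known vertices. -/
def Completable {n : ℕ} (s : (Fin n → Bool) → Option (Fin n → Bool)) : Prop :=
  ∃ t : (Fin n → Bool) → (Fin n → Bool), IsUSO t ∧ ∀ u a, s u = some a → t u = a

/-- Two known vertices of a partial outmap clash. -/
def ClashAt {n : ℕ} (s : (Fin n → Bool) → Option (Fin n → Bool))
    (u v : Fin n → Bool) : Prop :=
  u ≠ v ∧ ∃ a b, s u = some a ∧ s v = some b ∧ ∀ i, u i ≠ v i → a i = b i

/-- Restriction of a partial outmap to a subset `P` of its known vertices. -/
def restrictPO {n : ℕ} (s : (Fin n → Bool) → Option (Fin n → Bool))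
    (P : Finset (Fin n → Bool)) : (Fin n → Bool) → Option (Fin n → Bool) :=
  fun u => if u ∈ P then s u else none

/-- A `k`-certificate: a non-completable partial outmap with `k` known
vertices all of whose proper restrictions are completable. -/
def IsCertificate {n : ℕ} (k : ℕ)
    (s : (Fin n → Bool) → Option (Fin n → Bool)) : Prop :=
  (Known s).card = k ∧ ¬ Completable s ∧
    ∀ P ⊂ Known s, Completable (restrictPO s P)

/- ------------------------------------------------------------------ -/
/- Auxiliary material                                                  -/
/- ------------------------------------------------------------------ -/

/-- bool helpers -/
lemma bb1 : ∀ a b : Bool, a ≠ b → xor a b = true := by decide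
lemma bb2 : ∀ a b c : Bool, a ≠ b → xor a c = !(xor b c) := by decide
lemma bb3 : ∀ a b u v : Bool, a ≠ b → u ≠ v → xor a u = xor b v := by decide
lemma bb4 : ∀ a b c : Bool, xor a c ≠ xor b c → a ≠ b := by decide
lemma bb5 : ∀ a b : Bool, a ≠ b → a = !b := by decide
lemma bb6 : ∀ e a b : Bool, a ≠ b → xor e a ≠ xor e b := by decide
lemma bb7 : ∀ a u : Bool, xor (xor a u) u = a := by decide
lemma bb8 : ∀ a b c : Bool, a ≠ b → ¬(c = b) → c = a := by decide
lemma bb9 : ∀ a b : Bool, a ≠ b → xor a true = b := by decide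
lemma bb10 : ∀ a : Bool, xor a false = a := by decide
lemma bbself : ∀ a : Bool, xor a a = false := by decide
lemma bbne : ∀ s : Bool, (!s) ≠ s := by decide

/-- condition on offset maps equivalent to being a USO after xor -/
def GoodE {n : ℕ} (e : (Fin n → Bool) → (Fin n → Bool)) : Prop :=
  ∀ x y : Fin n → Bool, x ≠ y → ∃ i, x i ≠ y i ∧ e x i = e y i

def G0 (s1 s2 s3 : Bool) (l : Bool × Bool × Bool) : Bool × Bool × Bool :=
  match s1, s2, s3, l with
  | false, false, false, (false, false, false) => (false, false, false)
  | false, false, false, (false, false, true) => (false, false, false)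
  | false, false, false, (false, true, false) => (false, false, true)
  | false, false, false, (false, true, true) => (true, false, true)
  | false, false, false, (true, false, false) => (false, true, true)
  | false, false, false, (true, false, true) => (false, false, true)
  | false, false, false, (true, true, false) => (false, true, true)
  | false, false, false, (true, true, true) => (true, false, true)
  | false, false, true, (false, false, false) => (false, false, false)
  | false, false, true, (false, false, true) => (false, false, false)
  | false, false, true, (false, true, false) => (false, false, true)
  | false, false, true, (false, true, true) => (true, false, true)
  | false, false, true, (true, false, false) => (false, true, true)
  | false, false, true, (true, false, true) => (false, false, true)
  | false, false, true, (true, true, false) => (false, true, true)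
  | false, false, true, (true, true, true) => (true, false, true)
  | false, true, false, (false, false, false) => (false, false, false)
  | false, true, false, (false, false, true) => (false, false, false)
  | false, true, false, (false, true, false) => (true, false, true)
  | false, true, false, (false, true, true) => (false, false, true)
  | false, true, false, (true, false, false) => (false, false, true)
  | false, true, false, (true, false, true) => (false, true, true)
  | false, true, false, (true, true, false) => (true, false, true)
  | false, true, false, (true, true, true) => (false, true, true)
  | false, true, true, (false, false, false) => (false, false, false)
  | false, true, true, (false, false, true) => (false, false, false)
  | false, true, true, (false, true, false) => (true, false, true)
  | false, true, true, (false, true, true) => (false, false, true)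
  | false, true, true, (true, false, false) => (false, false, true)
  | false, true, true, (true, false, true) => (false, true, true)
  | false, true, true, (true, true, false) => (true, false, true)
  | false, true, true, (true, true, true) => (false, true, true)
  | true, false, false, (false, false, false) => (false, false, false)
  | true, false, false, (false, false, true) => (false, false, false)
  | true, false, false, (false, true, false) => (false, false, true)
  | true, false, false, (false, true, true) => (true, false, true)
  | true, false, false, (true, false, false) => (false, true, true)
  | true, false, false, (true, false, true) => (false, false, true)
  | true, false, false, (true, true, false) => (false, true, true)
  | true, false, false, (true, true, true) => (true, false, true)
  | true, false, true, (false, false, false) => (false, false, false)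
  | true, false, true, (false, false, true) => (false, false, false)
  | true, false, true, (false, true, false) => (false, false, true)
  | true, false, true, (false, true, true) => (true, false, true)
  | true, false, true, (true, false, false) => (false, true, true)
  | true, false, true, (true, false, true) => (false, false, true)
  | true, false, true, (true, true, false) => (false, true, true)
  | true, false, true, (true, true, true) => (true, false, true)
  | true, true, false, (false, false, false) => (false, false, false)
  | true, true, false, (false, false, true) => (false, false, false)
  | true, true, false, (false, true, false) => (true, false, true)
  | true, true, false, (false, true, true) => (false, false, true)
  | true, true, false, (true, false, false) => (false, false, true)
  | true, true, false, (true, false, true) => (false, true, true)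
  | true, true, false, (true, true, false) => (true, false, true)
  | true, true, false, (true, true, true) => (false, true, true)
  | true, true, true, (false, false, false) => (false, false, false)
  | true, true, true, (false, false, true) => (false, false, false)
  | true, true, true, (false, true, false) => (true, false, true)
  | true, true, true, (false, true, true) => (false, false, true)
  | true, true, true, (true, false, false) => (false, false, true)
  | true, true, true, (true, false, true) => (false, true, true)
  | true, true, true, (true, true, false) => (true, false, true)
  | true, true, true, (true, true, true) => (false, true, true)


lemma coreG (s1 s2 s3 : Bool) :
    G0 s1 s2 s3 (false, false, false) = (false, false, false) ∧
    G0 s1 s2 s3 (true, s1, s2) = (false, true, true) ∧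
    G0 s1 s2 s3 (s3, true, !s2) = (true, false, true) := by
  revert s1 s2 s3; decide

lemma coreG2 (s1 s2 s3 : Bool) (L L' : Bool × Bool × Bool) (h : L ≠ L') :
    (L.1 ≠ L'.1 ∧ (G0 s1 s2 s3 L).1 = (G0 s1 s2 s3 L').1) ∨
    (L.2.1 ≠ L'.2.1 ∧ (G0 s1 s2 s3 L).2.1 = (G0 s1 s2 s3 L').2.1) ∨
    (L.2.2 ≠ L'.2.2 ∧ (G0 s1 s2 s3 L).2.2 = (G0 s1 s2 s3 L').2.2) := by
  revert s1 s2 s3 L L'; decide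

def leafOf {n : ℕ} (u : Fin n → Bool) (p q r : Fin n) (x : Fin n → Bool) :
    Bool × Bool × Bool :=
  (xor (x p) (u p), xor (x q) (u q), xor (x r) (u r))

def caseE {n : ℕ} (u v w α β γ : Fin n → Bool) (p q r : Fin n)
    (x : Fin n → Bool) : Fin n → Bool :=
  fun j =>
    if j = p then
      xor (α p) (G0 (xor (v q) (u q)) (xor (v r) (u r)) (xor (w p) (u p)) (leafOf u p q r x)).1
    else if j = q then
      xor (α q) (G0 (xor (v q) (u q)) (xor (v r) (u r)) (xor (w p) (u p)) (leafOf u p q r x)).2.1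
    else if j = r then
      xor (α r) (G0 (xor (v q) (u q)) (xor (v r) (u r)) (xor (w p) (u p)) (leafOf u p q r x)).2.2
    else if leafOf u p q r x = leafOf u p q r v then β j
    else if leafOf u p q r x = leafOf u p q r w then γ j
    else α j

lemma caseE_congr {n : ℕ} (u v w α β γ : Fin n → Bool) (p q r : Fin n)
    {x y : Fin n → Bool} (h : leafOf u p q r x = leafOf u p q r y) :
    caseE u v w α β γ p q r x = caseE u v w α β γ p q r y := by
  funext j
  unfold caseE
  rw [h]

/-- Case 1 helper construction. -/
lemma case1aux {n : ℕ} (u v w α β γ : Fin n → Bool) (p : Fin n)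
    (hp : u p ≠ v p) (hw : w p = v p)
    (h1 : α p = β p) (h2 : β p = γ p)
    (hvw : ∃ r, v r ≠ w r ∧ β r = γ r) :
    ∃ e : (Fin n → Bool) → (Fin n → Bool),
      GoodE e ∧ e u = α ∧ e v = β ∧ e w = γ := by
  obtain ⟨r, hr1, hr2⟩ := hvw
  refine ⟨fun x => if x p = u p then α else if x r = v r then β else γ, ?_, ?_, ?_, ?_⟩
  · intro x y hxy
    by_cases hx : x p = u p <;> by_cases hy : y p = u p
    · obtain ⟨i, hi⟩ := Function.ne_iff.mp hxy
      exact ⟨i, hi, by simp [hx, hy]⟩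
    · refine ⟨p, fun h => hy (h.symm.trans hx), ?_⟩
      simp only [if_pos hx, if_neg hy]
      by_cases hyr : y r = v r
      · simp only [if_pos hyr]; exact h1
      · simp only [if_neg hyr]; exact h1.trans h2
    · refine ⟨p, fun h => hx (h.trans hy), ?_⟩
      simp only [if_pos hy, if_neg hx]
      by_cases hxr : x r = v r
      · simp only [if_pos hxr]; exact h1.symm
      · simp only [if_neg hxr]; exact (h1.trans h2).symm
    · simp only [if_neg hx, if_neg hy]
      by_cases hxr : x r = v r <;> by_cases hyr : y r = v r
      · obtain ⟨i, hi⟩ := Function.ne_iff.mp hxy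
        exact ⟨i, hi, by simp [hxr, hyr]⟩
      · exact ⟨r, fun h => hyr (h.symm.trans hxr), by simp only [if_pos hxr, if_neg hyr]; exact hr2⟩
      · exact ⟨r, fun h => hxr (h.trans hyr), by simp only [if_pos hyr, if_neg hxr]; exact hr2.symm⟩
      · obtain ⟨i, hi⟩ := Function.ne_iff.mp hxy
        exact ⟨i, hi, by simp [hxr, hyr]⟩
  · simp
  · have h1' : ¬(v p = u p) := fun h => hp h.symm
    have h2' : (v r = v r) := rfl
    simp [h1', h2']
  · have h1' : ¬(w p = u p) := fun h => hp (h.symm.trans hw)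
    have h2' : ¬(w r = v r) := fun h => hr1 h.symm
    simp [h1', h2']

/-- Case 1: some coordinate where a pair differs and all three offsets agree. -/
lemma case1 {n : ℕ} (u v w α β γ : Fin n → Bool) (p : Fin n)
    (hp : u p ≠ v p) (h1 : α p = β p) (h2 : β p = γ p)
    (huw : ∃ q, u q ≠ w q ∧ α q = γ q)
    (hvw : ∃ r, v r ≠ w r ∧ β r = γ r) :
    ∃ e : (Fin n → Bool) → (Fin n → Bool),
      GoodE e ∧ e u = α ∧ e v = β ∧ e w = γ := by
  by_cases hw : w p = v p
  · exact case1aux u v w α β γ p hp hw h1 h2 hvw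
  · have hw' : w p = u p := bb8 (u p) (v p) (w p) hp hw
    obtain ⟨e, hg, he2, he1, he3⟩ :=
      case1aux v u w β α γ p (Ne.symm hp) hw' h1.symm (h1.trans h2) huw
    exact ⟨e, hg, he1, he2, he3⟩

/-- Case 2 construction. -/
lemma case2 {n : ℕ} (u v w α β γ : Fin n → Bool) (p q r : Fin n)
    (hp1 : u p ≠ v p) (hp2 : α p = β p) (hp3 : γ p ≠ α p)
    (hq1 : u q ≠ w q) (hq2 : α q = γ q) (hq3 : β q ≠ α q)
    (hr1 : v r ≠ w r) (hr2 : β r = γ r) (hr3 : β r ≠ α r) :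
    ∃ e : (Fin n → Bool) → (Fin n → Bool),
      GoodE e ∧ e u = α ∧ e v = β ∧ e w = γ := by
  have hpq : p ≠ q := fun h => by subst h; exact hp3 hq2.symm
  have hpr : p ≠ r := fun h => by subst h; exact hr3 hp2.symm
  have hqr : q ≠ r := fun h => by subst h; exact hr3 (hr2.trans hq2.symm)
  obtain ⟨c1, c2, c3⟩ := coreG (xor (v q) (u q)) (xor (v r) (u r)) (xor (w p) (u p))
  have hLu : leafOf u p q r u = (false, false, false) := by
    simp [leafOf, bbself]
  have hLv : leafOf u p q r v = (true, xor (v q) (u q), xor (v r) (u r)) := by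
    unfold leafOf
    rw [bb1 _ _ (Ne.symm hp1)]
  have hLw : leafOf u p q r w = (xor (w p) (u p), true, !(xor (v r) (u r))) := by
    unfold leafOf
    rw [bb1 _ _ (Ne.symm hq1), bb2 (w r) (v r) (u r) (Ne.symm hr1)]
  have hGu : G0 (xor (v q) (u q)) (xor (v r) (u r)) (xor (w p) (u p))
      (leafOf u p q r u) = (false, false, false) := by rw [hLu]; exact c1
  have hGv : G0 (xor (v q) (u q)) (xor (v r) (u r)) (xor (w p) (u p))
      (leafOf u p q r v) = (false, true, true) := by rw [hLv]; exact c2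
  have hGw : G0 (xor (v q) (u q)) (xor (v r) (u r)) (xor (w p) (u p))
      (leafOf u p q r w) = (true, false, true) := by rw [hLw]; exact c3
  have hLuv : leafOf u p q r u ≠ leafOf u p q r v := by
    rw [hLu, hLv]; intro h; exact Bool.false_ne_true (congrArg Prod.fst h)
  have hLuw : leafOf u p q r u ≠ leafOf u p q r w := by
    rw [hLu, hLw]; intro h; exact Bool.false_ne_true (congrArg (fun z => z.2.1) h)
  have hLwv : leafOf u p q r w ≠ leafOf u p q r v := by
    rw [hLw, hLv]; intro h; exact bbne _ (congrArg (fun z => z.2.2) h)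
  refine ⟨caseE u v w α β γ p q r, ?_, ?_, ?_, ?_⟩
  · intro x y hxy
    by_cases hL : leafOf u p q r x = leafOf u p q r y
    · obtain ⟨i, hi⟩ := Function.ne_iff.mp hxy
      exact ⟨i, hi, congrFun (caseE_congr u v w α β γ p q r hL) i⟩
    · rcases coreG2 (xor (v q) (u q)) (xor (v r) (u r)) (xor (w p) (u p)) _ _ hL with
        ⟨hd, hg⟩ | ⟨hd, hg⟩ | ⟨hd, hg⟩
      · refine ⟨p, bb4 _ _ _ hd, ?_⟩
        unfold caseE
        simp only [eq_self_iff_true, if_true]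
        rw [hg]
      · refine ⟨q, bb4 _ _ _ hd, ?_⟩
        unfold caseE
        simp only [if_neg (Ne.symm hpq), eq_self_iff_true, if_true]
        rw [hg]
      · refine ⟨r, bb4 _ _ _ hd, ?_⟩
        unfold caseE
        simp only [if_neg (Ne.symm hpr), if_neg (Ne.symm hqr), eq_self_iff_true, if_true]
        rw [hg]
  · funext j
    unfold caseE
    by_cases hjp : j = p
    · subst hjp; simp only [eq_self_iff_true, if_true]; rw [hGu]; exact bb10 _
    · by_cases hjq : j = q
      · subst hjq
        simp only [if_neg (Ne.symm hpq), eq_self_iff_true, if_true, if_neg hjp]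
        rw [hGu]; exact bb10 _
      · by_cases hjr : j = r
        · subst hjr
          simp only [if_neg (Ne.symm hpr), if_neg (Ne.symm hqr), eq_self_iff_true, if_true,
            if_neg hjp, if_neg hjq]
          rw [hGu]; exact bb10 _
        · simp only [if_neg hjp, if_neg hjq, if_neg hjr, if_neg hLuv, if_neg hLuw]
  · funext j
    unfold caseE
    by_cases hjp : j = p
    · subst hjp; simp only [eq_self_iff_true, if_true]; rw [hGv]; exact (bb10 _).trans hp2
    · by_cases hjq : j = q
      · subst hjq
        simp only [if_neg (Ne.symm hpq), eq_self_iff_true, if_true, if_neg hjp]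
        rw [hGv]; exact bb9 _ _ (Ne.symm hq3)
      · by_cases hjr : j = r
        · subst hjr
          simp only [if_neg (Ne.symm hpr), if_neg (Ne.symm hqr), eq_self_iff_true, if_true,
            if_neg hjp, if_neg hjq]
          rw [hGv]; exact bb9 _ _ (Ne.symm hr3)
        · simp only [if_neg hjp, if_neg hjq, if_neg hjr, eq_self_iff_true, if_true]
  · funext j
    unfold caseE
    by_cases hjp : j = p
    · subst hjp; simp only [eq_self_iff_true, if_true]; rw [hGw]; exact bb9 _ _ (Ne.symm hp3)
    · by_cases hjq : j = q
      · subst hjq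
        simp only [if_neg (Ne.symm hpq), eq_self_iff_true, if_true, if_neg hjp]
        rw [hGw]; exact (bb10 _).trans hq2
      · by_cases hjr : j = r
        · subst hjr
          simp only [if_neg (Ne.symm hpr), if_neg (Ne.symm hqr), eq_self_iff_true, if_true,
            if_neg hjp, if_neg hjq]
          rw [hGw]; exact bb9 _ _ (fun h => hr3 (hr2.trans h.symm))
        · simp only [if_neg hjp, if_neg hjq, if_neg hjr, if_neg hLwv, eq_self_iff_true, if_true]

/-- The key extension lemma for offset maps. -/
lemma key {n : ℕ} (u v w α β γ : Fin n → Bool)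
    (huv : ∃ i, u i ≠ v i ∧ α i = β i)
    (huw : ∃ i, u i ≠ w i ∧ α i = γ i)
    (hvw : ∃ i, v i ≠ w i ∧ β i = γ i) :
    ∃ e : (Fin n → Bool) → (Fin n → Bool),
      GoodE e ∧ e u = α ∧ e v = β ∧ e w = γ := by
  have huv' : ∃ i, v i ≠ u i ∧ β i = α i := by
    obtain ⟨i, h1, h2⟩ := huv; exact ⟨i, Ne.symm h1, h2.symm⟩
  have huw' : ∃ i, w i ≠ u i ∧ γ i = α i := by
    obtain ⟨i, h1, h2⟩ := huw; exact ⟨i, Ne.symm h1, h2.symm⟩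
  have hvw' : ∃ i, w i ≠ v i ∧ γ i = β i := by
    obtain ⟨i, h1, h2⟩ := hvw; exact ⟨i, Ne.symm h1, h2.symm⟩
  by_cases hcase : ∃ i, (α i = β i ∧ β i = γ i) ∧
      (u i ≠ v i ∨ u i ≠ w i ∨ v i ≠ w i)
  · obtain ⟨p, ⟨h1, h2⟩, hd⟩ := hcase
    rcases hd with hd | hd | hd
    · exact case1 u v w α β γ p hd h1 h2 huw hvw
    · obtain ⟨e, hg, he1, he3, he2⟩ :=
        case1 u w v α γ β p hd (h1.trans h2) h2.symm huv hvw'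
      exact ⟨e, hg, he1, he2, he3⟩
    · obtain ⟨e, hg, he2, he3, he1⟩ :=
        case1 v w u β γ α p hd h2 (h1.trans h2).symm huv' huw'
      exact ⟨e, hg, he1, he2, he3⟩
  · have hns : ∀ i, α i = β i → β i = γ i →
        ¬(u i ≠ v i ∨ u i ≠ w i ∨ v i ≠ w i) :=
      fun i h1 h2 h3 => hcase ⟨i, ⟨h1, h2⟩, h3⟩
    obtain ⟨p, hp1, hp2⟩ := huv
    obtain ⟨q, hq1, hq2⟩ := huw
    obtain ⟨r, hr1, hr2⟩ := hvw
    have hp3 : γ p ≠ α p := fun h =>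
      hns p hp2 (hp2.symm.trans h.symm) (Or.inl hp1)
    have hq3 : β q ≠ α q := fun h =>
      hns q h.symm (h.trans hq2) (Or.inr (Or.inl hq1))
    have hr3 : β r ≠ α r := fun h =>
      hns r h.symm hr2 (Or.inr (Or.inr hr1))
    exact case2 u v w α β γ p q r hp1 hp2 hp3 hq1 hq2 hq3 hr1 hr2 hr3

/-- There are no 3-certificates: a partial outmap with exactly three known,
pairwise non-clashing vertices is completable. -/
theorem stmt16 (n : ℕ) (s : (Fin n → Bool) → Option (Fin n → Bool))
    (h3 : (Known s).card = 3)
    (hnc : ∀ u ∈ Known s, ∀ v ∈ Known s, u ≠ v → ¬ ClashAt s u v) :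
    Completable s := by
  rw [Finset.card_eq_three] at h3
  obtain ⟨u, v, w, huv, huw, hvw, hK⟩ := h3
  have hu : u ∈ Known s := by rw [hK]; simp
  have hv : v ∈ Known s := by rw [hK]; simp
  have hw : w ∈ Known s := by rw [hK]; simp
  obtain ⟨a, ha⟩ := Option.isSome_iff_exists.mp (Finset.mem_filter.mp hu).2
  obtain ⟨b, hb⟩ := Option.isSome_iff_exists.mp (Finset.mem_filter.mp hv).2
  obtain ⟨c, hc⟩ := Option.isSome_iff_exists.mp (Finset.mem_filter.mp hw).2
  have wuv : ∃ i, u i ≠ v i ∧ a i ≠ b i := by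
    have h := hnc u hu v hv huv
    have hcl : ¬ ∀ i, u i ≠ v i → a i = b i :=
      fun hall => h ⟨huv, a, b, ha, hb, hall⟩
    push_neg at hcl
    exact hcl
  have wuw : ∃ i, u i ≠ w i ∧ a i ≠ c i := by
    have h := hnc u hu w hw huw
    have hcl : ¬ ∀ i, u i ≠ w i → a i = c i :=
      fun hall => h ⟨huw, a, c, ha, hc, hall⟩
    push_neg at hcl
    exact hcl
  have wvw : ∃ i, v i ≠ w i ∧ b i ≠ c i := by
    have h := hnc v hv w hw hvw
    have hcl : ¬ ∀ i, v i ≠ w i → b i = c i :=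
      fun hall => h ⟨hvw, b, c, hb, hc, hall⟩
    push_neg at hcl
    exact hcl
  obtain ⟨e, hg, heu, hev, hew⟩ :=
    key u v w (fun i => xor (a i) (u i)) (fun i => xor (b i) (v i))
      (fun i => xor (c i) (w i))
      (by obtain ⟨i, h1, h2⟩ := wuv; exact ⟨i, h1, bb3 _ _ _ _ h2 h1⟩)
      (by obtain ⟨i, h1, h2⟩ := wuw; exact ⟨i, h1, bb3 _ _ _ _ h2 h1⟩)
      (by obtain ⟨i, h1, h2⟩ := wvw; exact ⟨i, h1, bb3 _ _ _ _ h2 h1⟩)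
  refine ⟨fun x j => xor (e x j) (x j), ?_, ?_⟩
  · intro x y hxy
    obtain ⟨i, hi, he⟩ := hg x y hxy
    refine ⟨i, hi, ?_⟩
    show xor (e x i) (x i) ≠ xor (e y i) (y i)
    rw [he]
    exact bb6 _ _ _ hi
  · intro x d hx
    have hxK : x ∈ Known s :=
      Finset.mem_filter.mpr ⟨Finset.mem_univ _, by rw [hx]; rfl⟩
    rw [hK] at hxK
    simp only [Finset.mem_insert, Finset.mem_singleton] at hxK
    rcases hxK with h | h | h
    · subst h
      have had : a = d := Option.some.inj (ha.symm.trans hx)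
      funext j
      show xor (e x j) (x j) = d j
      rw [heu]
      show xor (xor (a j) (x j)) (x j) = d j
      rw [bb7]
      exact congrFun had j
    · subst h
      have had : b = d := Option.some.inj (hb.symm.trans hx)
      funext j
      show xor (e x j) (x j) = d j
      rw [hev]
      show xor (xor (b j) (x j)) (x j) = d j
      rw [bb7]
      exact congrFun had j
    · subst h
      have had : c = d := Option.some.inj (hc.symm.trans hx)
      funext j
      show xor (e x j) (x j) = d j
      rw [hew]
      show xor (xor (c j) (x j)) (x j) = d j
      rw [bb7]
      exact congrFun had j
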